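/- Let ω ∈ ℝ be such that ω/π is irrational, let aₖ = (cos kω, sin kω) ∈ ℝ² for k = 0, 1, 2, ..., let A = {aₖ : k ∈ ℕ} and B = A \ {a₁}. Then A ≤ B (via the rotation by angle 2ω about the origin) and B ≤ A, but there is no surjective isometry f : ℝ² → ℝ² with f(A) = B, i.e. A is not geometrically equal to B. In particular, A is a bounded set that is not good. -/

import Mathlib

open Set Function

abbrev Plane := EuclideanSpace ℝ (Fin 2)

/-- Geometric equality: some surjective isometry of the plane maps `S₁` onto `S₂`. -/
def GeomEq (S₁ S₂ : Set Plane) : Prop :=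
  ∃ f : Plane → Plane, Isometry f ∧ Function.Surjective f ∧ f '' S₁ = S₂

/-- `S₁` is equal to or smaller than `S₂`: some surjective isometry maps `S₁` into `S₂`. -/
def GeomLe (S₁ S₂ : Set Plane) : Prop :=
  ∃ f : Plane → Plane, Isometry f ∧ Function.Surjective f ∧ f '' S₁ ⊆ S₂

/-- A figure is good if `A ≤ B` and `B ≤ A` imply `A ≈ B` for every figure `B`. -/
def IsGood (A : Set Plane) : Prop :=
  ∀ B : Set Plane, GeomLe A B → GeomLe B A → GeomEq A B

/-- A figure is strongly good if every surjective isometry mapping it into itself maps it onto itself. -/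
def IsStronglyGood (A : Set Plane) : Prop :=
  ∀ f : Plane → Plane, Isometry f → Function.Surjective f → f '' A ⊆ A → f '' A = A

section Helpers

open Complex

namespace IrrEx

noncomputable def c (ω : ℝ) (k : ℤ) : ℂ := Complex.exp ((k * ω : ℝ) * Complex.I)

lemma c_mul (ω : ℝ) (j k : ℤ) : c ω j * c ω k = c ω (j + k) := by
  rw [c, c, c, ← Complex.exp_add]; congr 1; push_cast; ring

lemma norm_c (ω : ℝ) (k : ℤ) : ‖c ω k‖ = 1 := by
  rw [c, Complex.norm_exp_ofReal_mul_I]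

lemma c_zero (ω : ℝ) : c ω 0 = 1 := by simp [c]

lemma conj_c (ω : ℝ) (k : ℤ) : (starRingEnd ℂ) (c ω k) = c ω (-k) := by
  rw [c, c, ← Complex.exp_conj]; congr 1; push_cast; simp [Complex.ext_iff]

lemma c_inj {ω : ℝ} (hω : Irrational (ω / Real.pi)) {p q : ℤ} (h : c ω p = c ω q) : p = q := by
  rw [c, c, Complex.exp_eq_exp_iff_exists_int] at h
  obtain ⟨n, hn⟩ := h
  have him := congrArg Complex.im hn
  push_cast at him
  simp [Complex.mul_im, Complex.add_im, Complex.mul_re] at him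
  by_contra hpq
  have hne : (p : ℝ) - q ≠ 0 := by
    intro h'; apply hpq; exact_mod_cast sub_eq_zero.mp h'
  apply hω
  refine ⟨(2 * n) / (p - q), ?_⟩
  have hπ := Real.pi_ne_zero
  push_cast
  rw [div_eq_div_iff hne hπ]
  nlinarith [him]

lemma ortho_line {u d : ℂ} (hd : d ≠ 0) (h : (u * (starRingEnd ℂ) d).re = 0) :
    ∃ r : ℝ, u = r * (I * d) := by
  refine ⟨(u * (starRingEnd ℂ) d).im / Complex.normSq d, ?_⟩
  have hnd0 : Complex.normSq d ≠ 0 := by simpa [Complex.normSq_eq_zero] using hd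
  have hnd : (Complex.normSq d : ℂ) ≠ 0 := Complex.ofReal_ne_zero.mpr hnd0
  have h1 : u * (starRingEnd ℂ) d = ((u * (starRingEnd ℂ) d).im : ℝ) * I := by
    apply Complex.ext <;> simp [h]
  have key : u * (Complex.normSq d : ℂ) = ((u * (starRingEnd ℂ) d).im : ℂ) * (I * d) := by
    rw [← Complex.mul_conj d]
    calc u * (d * (starRingEnd ℂ) d) = (u * (starRingEnd ℂ) d) * d := by ring
    _ = (((u * (starRingEnd ℂ) d).im : ℝ) : ℂ) * I * d := by rw [← h1]
    _ = _ := by ring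
  push_cast
  rw [div_mul_eq_mul_div, eq_div_iff hnd]
  exact key

lemma equidist_center {z₁ z₂ z₃ p : ℂ} (h12 : z₁ ≠ z₂) (h13 : z₁ ≠ z₃) (h23 : z₂ ≠ z₃)
    (n1 : ‖z₁‖ = 1) (n2 : ‖z₂‖ = 1) (n3 : ‖z₃‖ = 1)
    (d1 : ‖p - z₁‖ = 1) (d2 : ‖p - z₂‖ = 1) (d3 : ‖p - z₃‖ = 1) : p = 0 := by
  by_contra hp
  have key : ∀ z : ℂ, ‖z‖ = 1 → ‖p - z‖ = 1 → (p * (starRingEnd ℂ) z).re = Complex.normSq p / 2 := by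
    intro z hz hpz
    have h1 : Complex.normSq z = 1 := by
      rw [Complex.normSq_eq_norm_sq, hz]; norm_num
    have h2 : Complex.normSq (p - z) = 1 := by
      rw [Complex.normSq_eq_norm_sq, hpz]; norm_num
    rw [Complex.normSq_sub, h1] at h2
    linarith
  have k1 := key _ n1 d1
  have k2 := key _ n2 d2
  have k3 := key _ n3 d3
  have ortho : ∀ z w : ℂ, ‖z‖ = 1 → ‖w‖ = 1 →
      (p * (starRingEnd ℂ) z).re = (p * (starRingEnd ℂ) w).re →
      ((z + w) * (starRingEnd ℂ) (z - w)).re = 0 ∧ (p * (starRingEnd ℂ) (z - w)).re = 0 := by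
    intro z w hz hw hpe
    constructor
    · have hz' : Complex.normSq z = 1 := by
        rw [Complex.normSq_eq_norm_sq, hz]; norm_num
      have hw' : Complex.normSq w = 1 := by
        rw [Complex.normSq_eq_norm_sq, hw]; norm_num
      have e1 : (z + w) * (starRingEnd ℂ) (z - w)
          = (Complex.normSq z : ℂ) - Complex.normSq w + (w * (starRingEnd ℂ) z - z * (starRingEnd ℂ) w) := by
        rw [map_sub, ← Complex.mul_conj z, ← Complex.mul_conj w]
        ring
      rw [e1, hz', hw']
      have : (w * (starRingEnd ℂ) z).re = (z * (starRingEnd ℂ) w).re := by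
        rw [← Complex.conj_re (w * (starRingEnd ℂ) z), map_mul]; simp [mul_comm]
      simp [Complex.sub_re, Complex.add_re, this]
    · rw [map_sub, mul_sub, Complex.sub_re, hpe, sub_self]
  obtain ⟨o12, p12⟩ := ortho z₁ z₂ n1 n2 (by rw [k1, k2])
  obtain ⟨o13, p13⟩ := ortho z₁ z₃ n1 n3 (by rw [k1, k3])
  obtain ⟨-, p23⟩ := ortho z₂ z₃ n2 n3 (by rw [k2, k3])
  have hd12 : z₁ - z₂ ≠ 0 := sub_ne_zero.mpr h12
  have hd13 : z₁ - z₃ ≠ 0 := sub_ne_zero.mpr h13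
  obtain ⟨α, hα⟩ := ortho_line hd12 p12
  obtain ⟨β, hβ⟩ := ortho_line hd12 o12
  obtain ⟨γ, hγ⟩ := ortho_line hd13 p13
  obtain ⟨δ, hδ⟩ := ortho_line hd13 o13
  have hα0 : α ≠ 0 := by
    intro h0; apply hp; rw [hα, h0]; simp
  have hγ0 : γ ≠ 0 := by
    intro h0; apply hp; rw [hγ, h0]; simp
  have e12 : (α : ℂ) * (z₁ + z₂) = (β : ℂ) * p := by rw [hβ, hα]; ring
  have e13 : (γ : ℂ) * (z₁ + z₃) = (δ : ℂ) * p := by rw [hδ, hγ]; ring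
  have e23 : ((α * γ : ℝ) : ℂ) * (z₂ - z₃) = ((γ * β - α * δ : ℝ) : ℂ) * p := by
    push_cast
    linear_combination (γ : ℂ) * e12 - (α : ℂ) * e13
  have h1 : (p * (starRingEnd ℂ) (((α * γ : ℝ) : ℂ) * (z₂ - z₃))).re = 0 := by
    rw [map_mul, Complex.conj_ofReal]
    rw [show p * (((α * γ : ℝ) : ℂ) * (starRingEnd ℂ) (z₂ - z₃))
        = ((α * γ : ℝ) : ℂ) * (p * (starRingEnd ℂ) (z₂ - z₃)) from by ring]
    rw [Complex.re_ofReal_mul, p23, mul_zero]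
  rw [e23] at h1
  have hre : p * (starRingEnd ℂ) (((γ * β - α * δ : ℝ) : ℂ) * p)
      = (((γ * β - α * δ) * Complex.normSq p : ℝ) : ℂ) := by
    rw [map_mul, Complex.conj_ofReal,
      show p * (((γ * β - α * δ : ℝ) : ℂ) * (starRingEnd ℂ) p)
        = ((γ * β - α * δ : ℝ) : ℂ) * (p * (starRingEnd ℂ) p) from by ring,
      Complex.mul_conj]
    push_cast; ring
  rw [hre] at h1
  simp only [Complex.ofReal_re] at h1
  have hnp : Complex.normSq p ≠ 0 := by simpa [Complex.normSq_eq_zero] using hp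
  have ht : γ * β - α * δ = 0 := by
    rcases mul_eq_zero.mp h1 with h | h
    · exact h
    · exact absurd h hnp
  rw [ht] at e23
  simp only [Complex.ofReal_zero, zero_mul] at e23
  rcases mul_eq_zero.mp e23 with h | h
  · exact (Complex.ofReal_ne_zero.mpr (mul_ne_zero hα0 hγ0)) h
  · exact h23 (sub_eq_zero.mp h)

end IrrEx

end Helpers

/-- Example 1.4: for an angle `ω` with `ω / π` irrational, the orbit
`A = {(cos kω, sin kω) : k ∈ ℕ}` and `B = A \ {a 1}` satisfy `A ≤ B` and `B ≤ A`
but are not geometrically equal; in particular `A` is a bounded set that is not good. -/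
theorem irrationalRotation_counterexample (ω : ℝ) (hω : Irrational (ω / Real.pi)) :
    let a : ℕ → Plane := fun k => !₂[Real.cos (k * ω), Real.sin (k * ω)]
    let A : Set Plane := Set.range a
    let B : Set Plane := A \ {a 1}
    GeomLe A B ∧ GeomLe B A ∧ ¬ GeomEq A B ∧ Bornology.IsBounded A ∧ ¬ IsGood A := by
  intro a A B
  set e : ℂ ≃ₗᵢ[ℝ] Plane := Complex.orthonormalBasisOneI.repr with he
  set c' : ℕ → ℂ := fun k => IrrEx.c ω k with hc'
  have ha : ∀ k : ℕ, a k = e (c' k) := by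
    intro k
    show (!₂[Real.cos (k * ω), Real.sin (k * ω)] : Plane) = Complex.orthonormalBasisOneI.repr (IrrEx.c ω k)
    have hr : (IrrEx.c ω k).re = Real.cos (k * ω) := by
      rw [IrrEx.c, Complex.exp_ofReal_mul_I_re]; push_cast; rfl
    have hi : (IrrEx.c ω k).im = Real.sin (k * ω) := by
      rw [IrrEx.c, Complex.exp_ofReal_mul_I_im]; push_cast; rfl
    ext i
    fin_cases i <;> simp [hr, hi]
  have hcinj : Function.Injective c' := by
    intro j k h
    have := IrrEx.c_inj hω h
    exact_mod_cast this
  have hainj : Function.Injective a := by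
    intro j k h
    rw [ha, ha] at h
    exact hcinj (e.injective h)
  have hArange : A = e '' Set.range c' := by
    have hfun : a = ⇑e ∘ c' := funext ha
    show Set.range a = _
    rw [hfun, Set.range_comp]
  -- Part 1 : GeomLe A B
  have part1 : GeomLe A B := by
    have hu : ‖IrrEx.c ω 2‖ = 1 := IrrEx.norm_c ω 2
    set u : Circle := ⟨IrrEx.c ω 2, by simp [Submonoid.unitSphere, hu]⟩ with hudef
    set F : Plane ≃ₗᵢ[ℝ] Plane := e.symm.trans ((rotation u).trans e) with hF
    refine ⟨F, F.isometry, F.surjective, ?_⟩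
    have hFa : ∀ k : ℕ, F (a k) = a (k + 2) := by
      intro k
      rw [ha k, ha (k + 2)]
      show e (rotation u (e.symm (e (c' k)))) = _
      rw [e.symm_apply_apply]
      congr 1
      rw [rotation_apply]
      show IrrEx.c ω 2 * IrrEx.c ω k = IrrEx.c ω ((k : ℤ) + 2)
      rw [IrrEx.c_mul]
      congr 1
      ring
    rintro x ⟨y, ⟨k, rfl⟩, rfl⟩
    refine ⟨⟨k + 2, (hFa k).symm⟩, ?_⟩
    intro hmem
    have : k + 2 = 1 := hainj (by rwa [hFa k, Set.mem_singleton_iff] at hmem; )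
    omega
  -- Part 2
  have part2 : GeomLe B A := ⟨id, isometry_id, surjective_id, by rw [Set.image_id]; exact Set.diff_subset⟩
  -- Part 3
  have part3 : ¬ GeomEq A B := by
    rintro ⟨f, hiso, hsurj, himg⟩
    set g : ℂ → ℂ := fun z => e.symm (f (e z)) with hg
    have hgiso : Isometry g := e.symm.isometry.comp (hiso.comp e.isometry)
    have hgsurj : Function.Surjective g :=
      e.symm.surjective.comp (hsurj.comp e.surjective)
    have hgA : g '' Set.range c' = Set.range c' \ {c' 1} := by
      have h1 : g '' Set.range c' = ⇑e.symm '' (f '' (⇑e '' Set.range c')) := by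
        rw [Set.image_image, Set.image_image]
      rw [h1, ← hArange, himg]
      show ⇑e.symm '' (A \ {a 1}) = _
      rw [Set.image_diff e.symm.injective, Set.image_singleton]
      congr 1
      · rw [hArange, Set.image_image]
        simp
      · rw [ha 1]
        rw [e.symm_apply_apply]
    have hmem : ∀ k : ℕ, g (c' k) ∈ Set.range c' \ {c' 1} := by
      intro k
      rw [← hgA]
      exact Set.mem_image_of_mem g ⟨k, rfl⟩
    -- g 0 = 0
    have hdist : ∀ k : ℕ, ‖g 0 - g (c' k)‖ = 1 := by
      intro k
      rw [← dist_eq_norm, hgiso.dist_eq, dist_eq_norm, zero_sub, norm_neg]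
      exact IrrEx.norm_c ω k
    have hnormg : ∀ k : ℕ, ‖g (c' k)‖ = 1 := by
      intro k
      obtain ⟨m, hm⟩ := (hmem k).1
      rw [← hm]
      exact IrrEx.norm_c ω m
    have hgne : ∀ j k : ℕ, j ≠ k → g (c' j) ≠ g (c' k) := by
      intro j k hjk h
      exact hjk (hcinj (hgiso.injective h))
    have h0 : g 0 = 0 :=
      IrrEx.equidist_center (hgne 0 2 (by norm_num)) (hgne 0 3 (by norm_num))
        (hgne 2 3 (by norm_num)) (hnormg 0) (hnormg 2) (hnormg 3)
        (hdist 0) (hdist 2) (hdist 3)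
    set G : ℂ ≃ᵢ ℂ :=
      { Equiv.ofBijective g ⟨hgiso.injective, hgsurj⟩ with isometry_toFun := hgiso } with hG
    have hGcoe : ∀ z, G z = g z := fun z => rfl
    set L := G.toRealLinearIsometryEquivOfMapZero (by rw [hGcoe 0]; exact h0) with hL
    have hLcoe : ∀ z, L z = g z := by
      intro z
      rw [hL, IsometryEquiv.coe_toRealLinearIsometryEquivOfMapZero]
      exact hGcoe z
    obtain ⟨u, hu | hu⟩ := linear_isometry_complex L
    · -- rotation case : g z = u * z
      have hrot : ∀ z, g z = (u : ℂ) * z := by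
        intro z
        rw [← hLcoe, hu, rotation_apply]
      have hc0 : c' 0 = 1 := IrrEx.c_zero ω
      have hu0 : g (c' 0) = (u : ℂ) := by rw [hrot, hc0, mul_one]
      obtain ⟨m, hm⟩ := (hmem 0).1
      -- ∃ k, g (c' k) = c' 0
      have hc01 : c' 0 ∈ Set.range c' \ {c' 1} := by
        refine ⟨⟨0, rfl⟩, ?_⟩
        intro h
        have : (0 : ℕ) = 1 := hcinj h
        omega
      rw [← hgA] at hc01
      obtain ⟨z, ⟨k, rfl⟩, heq⟩ := hc01
      have hum : (u : ℂ) = c' m := by rw [hm, hu0]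
      rw [hrot, hum] at heq
      -- heq : c' m * c' k = c' 0
      have hmk : IrrEx.c ω ((m : ℤ) + k) = IrrEx.c ω 0 := by
        rw [← IrrEx.c_mul]
        exact heq
      have : (m : ℤ) + k = 0 := IrrEx.c_inj hω hmk
      have hm0 : m = 0 := by omega
      have hu1 : (u : ℂ) = 1 := by rw [hum, hm0, hc0]
      have : g (c' 1) = c' 1 := by rw [hrot, hu1, one_mul]
      exact (hmem 1).2 (by rw [this]; exact rfl)
    · -- conjugation case : g z = u * conj z
      have hconj : ∀ z, g z = (u : ℂ) * (starRingEnd ℂ) z := by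
        intro z
        rw [← hLcoe, hu]
        rfl
      have hc0 : c' 0 = 1 := IrrEx.c_zero ω
      have hu0 : g (c' 0) = (u : ℂ) := by
        rw [hconj, hc0, map_one, mul_one]
      obtain ⟨m, hm⟩ := (hmem 0).1
      -- g (c' (m+1)) = c ω (-1)
      have hum : (u : ℂ) = c' m := by rw [hm, hu0]
      have hneg : g (c' (m + 1)) = IrrEx.c ω (-1) := by
        rw [hconj, hum]
        show IrrEx.c ω m * (starRingEnd ℂ) (IrrEx.c ω ((m + 1 : ℕ) : ℤ)) = _
        rw [IrrEx.conj_c, IrrEx.c_mul]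
        congr 1
        push_cast
        ring
      obtain ⟨n, hn⟩ := (hmem (m + 1)).1
      rw [hneg] at hn
      have : (n : ℤ) = -1 := IrrEx.c_inj hω hn
      omega
  -- Part 4 : bounded
  have part4 : Bornology.IsBounded A := by
    apply (Metric.isBounded_closedBall (x := (0 : Plane)) (r := 1)).subset
    rintro x ⟨k, rfl⟩
    rw [Metric.mem_closedBall, ha, dist_zero_right, e.norm_map]
    exact le_of_eq (IrrEx.norm_c ω k)
  exact ⟨part1, part2, part3, part4, fun hgood => part3 (hgood B part1 part2)⟩
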